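/- Over the field F_p with p > 5 prime, let 2 ≤ a ≤ (p-1)/2 with gcd(a, p+1) = 1, and consider f(X) = (X+1)(X + a/(a-1))^p - Y·X^a as a polynomial in X over the rational function field F_p(Y). Then the discriminant of f equals (-1)^{(p+1)/2} · a^{pa-p+a}/(a-1)^{pa-2p+a-1} · Y^{p+1}. -/

import Mathlib

open Polynomial

set_option maxHeartbeats 1000000 in
private lemma stmt15_core (p : ℕ) (hp : 5 < p) (a : ℕ) (ha2 : 2 ≤ a) (hap : a < p)
    (hpodd : Odd p) (F K : Type) [Field F] [Field K] [Algebra F K] [IsAlgClosed K] :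
    ∀ (Y b : F) (f : Polynomial F) (fK : Polynomial K),
      Y ≠ 0 → (p : F) = 0 → (∀ n : ℕ, 0 < n → n < p → (n : F) ≠ 0) →
      b = (a : F) / ((a : F) - 1) →
      f = (X + 1) * (X + C b) ^ p - C Y * X ^ a →
      fK = f.map (algebraMap F K) →
      ((-1) ^ ((p + 1) * p / 2) *
        (fK.roots.map (fun r => (derivative fK).eval r)).prod) =
      algebraMap F K
        ((-1) ^ ((p + 1) / 2) * (a : F) ^ (p * a - p + a) /
            ((a : F) - 1) ^ (p * a - 2 * p + a - 1) * Y ^ (p + 1)) := by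
  intro Y b f fK hYne hpF hcast hb hf hfK
  set φ := algebraMap F K with hφ
  have hevenp1 : Even (p + 1) := by
    rcases hpodd with ⟨k, hk⟩; exact ⟨k + 1, by omega⟩
  have haF : (a : F) ≠ 0 := hcast a (by omega) hap
  have ha1F : (a : F) - 1 ≠ 0 := by
    have h1 : ((a - 1 : ℕ) : F) ≠ 0 := hcast (a - 1) (by omega) (by omega)
    have h2 : ((a - 1 : ℕ) : F) = (a : F) - 1 := by
      push_cast [Nat.cast_sub (by omega : 1 ≤ a)]; ring
    rwa [h2] at h1
  have hφinj : Function.Injective φ := φ.injective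
  have hbdef : b * ((a : F) - 1) = (a : F) := by
    rw [hb, div_mul_cancel₀ _ ha1F]
  -- monicity and degree
  have hmon₁ : ((X + 1) * (X + C b) ^ p : F[X]).Monic := by
    have h1 : (X + 1 : F[X]).Monic := by
      simpa using monic_X_add_C (1 : F)
    exact h1.mul ((monic_X_add_C b).pow p)
  have hdeg₁ : ((X + 1) * (X + C b) ^ p : F[X]).natDegree = p + 1 := by
    rw [Monic.natDegree_mul (by simpa using monic_X_add_C (1 : F)) ((monic_X_add_C b).pow p)]
    rw [natDegree_pow, natDegree_X_add_C]
    have : (X + 1 : F[X]) = X + C 1 := by simp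
    rw [this, natDegree_X_add_C]
    ring
  have hdeg₁' : ((X + 1) * (X + C b) ^ p : F[X]).degree = ((p + 1 : ℕ) : WithBot ℕ) := by
    rw [degree_eq_natDegree hmon₁.ne_zero, hdeg₁]
  have hdeg₂ : (C Y * X ^ a : F[X]).degree < ((X + 1) * (X + C b) ^ p : F[X]).degree := by
    calc (C Y * X ^ a : F[X]).degree ≤ (a : WithBot ℕ) := degree_C_mul_X_pow_le a Y
      _ < ((p + 1 : ℕ) : WithBot ℕ) := by exact_mod_cast (by omega : a < p + 1)
      _ = ((X + 1) * (X + C b) ^ p : F[X]).degree := hdeg₁'.symm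
  have hfmonic : f.Monic := by
    rw [hf, sub_eq_add_neg]
    exact hmon₁.add_of_left (by simpa using hdeg₂)
  have hfdeg : f.natDegree = p + 1 := by
    have hd : f.degree = ((p + 1 : ℕ) : WithBot ℕ) := by
      rw [hf, degree_sub_eq_left_of_degree_lt hdeg₂, hdeg₁']
    exact natDegree_eq_of_degree_eq_some hd
  have hfKmonic : fK.Monic := by rw [hfK]; exact hfmonic.map φ
  have hsplits : Splits fK := IsAlgClosed.splits fK
  have hcard : Multiset.card fK.roots = p + 1 := by
    rw [splits_iff_card_roots.mp hsplits, hfK, hfmonic.natDegree_map, hfdeg]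
  have hprodroots : fK = (fK.roots.map fun r => X - C r).prod :=
    hsplits.eq_prod_roots_of_monic hfKmonic
  -- evaluation products
  have heval : ∀ c : K, fK.eval c = (fK.roots.map fun r => c - r).prod := by
    intro c
    conv_lhs => rw [hprodroots]
    rw [eval_multiset_prod, Multiset.map_map]
    simp [Function.comp]
  have hneg1pow : ((-1 : K)) ^ (p + 1) = 1 := Even.neg_one_pow hevenp1
  have hnegprod : ∀ g : K → K,
      (fK.roots.map fun r => -(g r)).prod = (fK.roots.map g).prod := by
    intro g
    have h1 : (fK.roots.map fun r => -(g r)) = fK.roots.map fun r => (-1) * g r := by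
      simp
    rw [h1, Multiset.prod_map_mul, Multiset.map_const', Multiset.prod_replicate, hcard,
      hneg1pow, one_mul]
  have hevalφ : ∀ c : F, fK.eval (φ c) = φ (f.eval c) := by
    intro c; rw [hfK, eval_map, eval₂_at_apply]
  have hplus : ∀ c : F, (fK.roots.map fun r => r + φ c).prod = φ (f.eval (-c)) := by
    intro c
    have h1 : fK.eval (-φ c) = (fK.roots.map fun r => -(r + φ c)).prod := by
      rw [heval]
      congr 1
      exact Multiset.map_congr rfl (fun r _ => by ring)
    rw [hnegprod] at h1
    rw [← h1, show (-φ c) = φ (-c) by rw [map_neg], hevalφ]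
  have hprod0 : fK.roots.prod = φ (f.eval 0) := by
    have h1 : fK.eval (φ 0) = (fK.roots.map fun r => -(r)).prod := by
      rw [heval]
      congr 1
      exact Multiset.map_congr rfl (fun r _ => by simp)
    rw [hnegprod] at h1
    rw [← hevalφ 0, h1, Multiset.map_id']
  -- evaluations of f
  have hev1 : f.eval (-1) = -((-1) ^ a * Y) := by
    rw [hf]
    simp only [eval_sub, eval_mul, eval_pow, eval_add, eval_X, eval_one, eval_C]
    rw [neg_add_cancel]
    ring
  have hev0 : f.eval 0 = b ^ p := by
    rw [hf]
    simp only [eval_sub, eval_mul, eval_pow, eval_add, eval_X, eval_one, eval_C]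
    rw [zero_pow (by omega : a ≠ 0)]
    ring
  have hevb : f.eval (-b) = -((-1) ^ a * Y * b ^ a) := by
    rw [hf]
    simp only [eval_sub, eval_mul, eval_pow, eval_add, eval_X, eval_one, eval_C]
    rw [neg_add_cancel, zero_pow (by omega : p ≠ 0), neg_pow]
    ring
  -- derivative
  have hderiv : derivative f = (X + C b) ^ p - C Y * (C (a : F) * X ^ (a - 1)) := by
    rw [hf, derivative_sub, derivative_mul, derivative_pow, derivative_mul, derivative_C,
      derivative_X_pow]
    simp [hpF]
  have hderivK : derivative fK = (X + C (φ b)) ^ p - C (φ Y) * (C (φ ((a : F))) * X ^ (a - 1)) := by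
    rw [hfK, derivative_map, hderiv]
    simp only [Polynomial.map_sub, Polynomial.map_pow, Polynomial.map_add, Polynomial.map_mul,
      map_C, map_X]
  have hfKexp : fK = (X + 1) * (X + C (φ b)) ^ p - C (φ Y) * X ^ a := by
    rw [hfK, hf]
    simp only [Polynomial.map_sub, Polynomial.map_pow, Polynomial.map_add, Polynomial.map_mul,
      Polynomial.map_one, map_C, map_X]
  have hbK : φ b * (φ ((a : F)) - 1) = φ ((a : F)) := by
    have := congrArg φ hbdef
    rw [map_mul, map_sub, map_one] at this
    exact this
  -- per-root identity
  have hroot : ∀ r ∈ fK.roots, (r + 1) * ((derivative fK).eval r) =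
      (φ Y * (1 - φ ((a : F)))) * (r ^ (a - 1) * (r + φ b)) := by
    intro r hr
    have hr0 : fK.eval r = 0 := by
      have := isRoot_of_mem_roots hr
      exact this
    have hrne : r + 1 ≠ 0 := by
      intro h
      have hre : r = -1 := by linear_combination h
      rw [hre, show (-1 : K) = φ (-1 : F) by rw [map_neg, map_one], hevalφ, hev1] at hr0
      have : (-((-1) ^ a * Y) : F) = 0 := hφinj (by simpa using hr0)
      have hY0 : Y = 0 := by
        rcases mul_eq_zero.mp (neg_eq_zero.mp this) with h1 | h1
        · exact absurd h1 (pow_ne_zero a (by norm_num))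
        · exact h1
      exact hYne hY0
    have heq : (r + 1) * (r + φ b) ^ p = φ Y * r ^ a := by
      rw [hfKexp] at hr0
      simp only [eval_sub, eval_mul, eval_pow, eval_add, eval_X, eval_one, eval_C] at hr0
      linear_combination hr0
    have hra : r ^ a = r ^ (a - 1) * r := by
      rw [← pow_succ]
      congr 1
      omega
    rw [hderivK]
    simp only [eval_sub, eval_mul, eval_pow, eval_add, eval_X, eval_one, eval_C]
    rw [mul_sub, heq, hra]
    linear_combination (φ Y * r ^ (a - 1)) * hbK
  -- assemble products
  have hconstprod : (fK.roots.map fun _ => (φ Y * (1 - φ ((a : F))))).prod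
      = (φ Y * (1 - φ ((a : F)))) ^ (p + 1) := by
    rw [Multiset.map_const', Multiset.prod_replicate, hcard]
  have hpowprod : (fK.roots.map fun r => r ^ (a - 1)).prod = fK.roots.prod ^ (a - 1) := by
    have h := Multiset.prod_map_pow (m := fK.roots) (f := fun r : K => r) (n := a - 1)
    rwa [Multiset.map_id'] at h
  have hmain : φ (f.eval (-1)) * (fK.roots.map fun r => (derivative fK).eval r).prod
      = (φ Y * (1 - φ ((a : F)))) ^ (p + 1) * (φ (f.eval 0) ^ (a - 1) * φ (f.eval (-b))) := by
    calc φ (f.eval (-1)) * (fK.roots.map fun r => (derivative fK).eval r).prod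
        = (fK.roots.map fun r => r + φ 1).prod
            * (fK.roots.map fun r => (derivative fK).eval r).prod := by
          rw [hplus 1]
      _ = (fK.roots.map fun r => (r + 1) * ((derivative fK).eval r)).prod := by
          rw [Multiset.prod_map_mul]; norm_num [map_one]
      _ = (fK.roots.map fun r =>
            (φ Y * (1 - φ ((a : F)))) * (r ^ (a - 1) * (r + φ b))).prod := by
          rw [Multiset.map_congr rfl hroot]
      _ = (φ Y * (1 - φ ((a : F)))) ^ (p + 1) * (φ (f.eval 0) ^ (a - 1) * φ (f.eval (-b))) := by
          rw [Multiset.prod_map_mul, hconstprod, Multiset.prod_map_mul, hpowprod, hprod0,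
            hplus b]
  -- exponent arithmetic
  have hE1 : p * a - p + a = p * (a - 1) + a := by
    have h1 : p * (a - 1) + p = p * a := by
      rw [← Nat.mul_succ]
      congr 1
      omega
    generalize hq : p * (a - 1) = q at h1 ⊢
    generalize hs : p * a = s at h1 ⊢
    omega
  have h2p : 2 * p ≤ p * a := by
    calc 2 * p = p * 2 := by ring
      _ ≤ p * a := Nat.mul_le_mul_left p ha2
  have hE2 : p * a - p + a = (p * a - 2 * p + a - 1) + (p + 1) := by
    generalize hs : p * a = s at h2p ⊢
    omega
  have hevenp1F : ((-1 : F)) ^ (p + 1) = 1 := Even.neg_one_pow hevenp1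
  have hTF : (Y * (1 - (a : F))) ^ (p + 1) * ((b ^ p) ^ (a - 1) * (-((-1) ^ a * Y * b ^ a)))
      = (-((-1) ^ a * Y)) * (Y ^ (p + 1) * ((a : F) - 1) ^ (p + 1) * b ^ (p * a - p + a)) := by
    have h1 : (1 - (a : F)) ^ (p + 1) = ((a : F) - 1) ^ (p + 1) := by
      rw [show (1 - (a : F)) = -((a : F) - 1) from by ring, Even.neg_pow hevenp1]
    have h2 : b ^ (p * (a - 1) + a) = (b ^ p) ^ (a - 1) * b ^ a := by
      rw [pow_add, pow_mul]
    rw [hE1, mul_pow, h1, h2]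
    ring
  have hP2ne : φ (f.eval (-1)) ≠ 0 := by
    rw [hev1]
    intro h
    have h0 : (-((-1) ^ a * Y) : F) = 0 := hφinj (by simpa using h)
    rcases mul_eq_zero.mp (neg_eq_zero.mp h0) with h1 | h1
    · exact absurd h1 (pow_ne_zero a (by norm_num))
    · exact hYne h1
  have hP1 : (fK.roots.map fun r => (derivative fK).eval r).prod
      = φ (Y ^ (p + 1) * ((a : F) - 1) ^ (p + 1) * b ^ (p * a - p + a)) := by
    apply mul_left_cancel₀ hP2ne
    rw [hmain]
    have hc : φ Y * (1 - φ ((a : F))) = φ (Y * (1 - (a : F))) := by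
      rw [map_mul, map_sub, map_one]
    rw [hc, ← map_pow, ← map_pow, ← map_mul, ← map_mul, ← map_mul]
    apply congrArg φ
    rw [hev0, hevb, hev1]
    exact hTF
  have hsign : ((-1 : F)) ^ ((p + 1) * p / 2) = (-1) ^ ((p + 1) / 2) := by
    have h2 : 2 ∣ (p + 1) := hevenp1.two_dvd
    rw [Nat.mul_comm (p + 1) p, Nat.mul_div_assoc p h2, pow_mul, Odd.neg_one_pow hpodd]
  rw [hP1, show ((-1 : K)) = φ (-1 : F) from by rw [map_neg, map_one], ← map_pow, ← map_mul]
  apply congrArg φ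
  rw [hsign, hb, div_pow, hE2, pow_add, pow_add]
  field_simp
  ring


private lemma stmt15_aux (p : ℕ) [Fact p.Prime] (hp : 5 < p) (a : ℕ) (ha2 : 2 ≤ a)
    (ha : a ≤ (p - 1) / 2) :
    ∀ (Y b : RatFunc (ZMod p)) (f : Polynomial (RatFunc (ZMod p)))
      (fK : Polynomial (AlgebraicClosure (RatFunc (ZMod p)))),
      Y = RatFunc.X →
      b = (a : RatFunc (ZMod p)) / ((a : RatFunc (ZMod p)) - 1) →
      f = (X + 1) * (X + C b) ^ p - C Y * X ^ a →
      fK = f.map (algebraMap _ _) →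
      ((-1) ^ ((p + 1) * p / 2) *
        (fK.roots.map (fun r => (derivative fK).eval r)).prod) =
      algebraMap (RatFunc (ZMod p)) (AlgebraicClosure (RatFunc (ZMod p)))
        ((-1) ^ ((p + 1) / 2) * (a : RatFunc (ZMod p)) ^ (p * a - p + a) /
            ((a : RatFunc (ZMod p)) - 1) ^ (p * a - 2 * p + a - 1) * Y ^ (p + 1)) := by
  set F := RatFunc (ZMod p) with hF
  intro Y b f fK hY hb hf hfK
  have hprime : p.Prime := Fact.out
  have hpodd : Odd p := hprime.odd_of_ne_two (by omega)
  have hap : a < p := by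
    have : (p - 1) / 2 < p := by omega
    omega
  haveI : CharP F p := charP_of_injective_algebraMap' (ZMod p) (A := F) p
  have hpF : (p : F) = 0 := CharP.cast_eq_zero F p
  have hcast : ∀ n : ℕ, 0 < n → n < p → (n : F) ≠ 0 := by
    intro n hn1 hn2
    rw [Ne, CharP.cast_eq_zero_iff F p n]
    intro hdvd
    exact absurd (Nat.le_of_dvd hn1 hdvd) (by omega)
  have hYne : Y ≠ 0 := by rw [hY]; exact RatFunc.X_ne_zero
  exact stmt15_core p hp a ha2 hap hpodd F (AlgebraicClosure F)
    Y b f fK hYne hpF hcast hb hf hfK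

theorem stmt15 (p : ℕ) [Fact p.Prime] (hp : 5 < p) (a : ℕ) (ha2 : 2 ≤ a)
    (ha : a ≤ (p - 1) / 2) (hgcd : Nat.gcd a (p + 1) = 1) :
    let F := RatFunc (ZMod p)
    let Y : F := RatFunc.X
    let b : F := (a : F) / ((a : F) - 1)
    let f : Polynomial F := (X + 1) * (X + C b) ^ p - C Y * X ^ a
    let K := AlgebraicClosure F
    let fK := f.map (algebraMap F K)
    ((-1) ^ ((p + 1) * p / 2) *
        (fK.roots.map (fun r => (derivative fK).eval r)).prod : K) =
      algebraMap F K
        ((-1) ^ ((p + 1) / 2) * (a : F) ^ (p * a - p + a) /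
            ((a : F) - 1) ^ (p * a - 2 * p + a - 1) * Y ^ (p + 1)) := by
  intro F Y b f K fK
  exact stmt15_aux p hp a ha2 ha Y b f fK rfl rfl rfl rfl
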